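/- For the Lorentz boost vector field ξ = K_1 = t∂_1 − c⁻²x_1∂_t on {x ∈ ℝ⁴ : x·x ≠ 0}, the Lie derivative of the tensor g_{μν} = −(l²/(x·x)²)(η_{μρ}η_{ντ} − η_{μν}η_{ρτ})x^ρx^τ vanishes: ℒ_ξ g_{μν} = g_{μν,λ}ξ^λ + g_{μλ}∂_νξ^λ + g_{λν}∂_μξ^λ = 0. -/

import Mathlib

open scoped BigOperators

/-- Sign of the Minkowski metric η = diag(1,-1,-1,-1). -/
def etaS (μ : Fin 4) : ℝ := if μ = 0 then 1 else -1

/-- Minkowski metric components η_{μν}. -/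
def etaM (μ ν : Fin 4) : ℝ := if μ = ν then etaS μ else 0

/-- Minkowski inner product x·y = η_{μν}x^μy^ν. -/
def mdot (x y : Fin 4 → ℝ) : ℝ := ∑ μ, etaS μ * x μ * y μ

/-- Lowered components x_μ = η_{μν}x^ν. -/
def lowerIdx (x : Fin 4 → ℝ) (μ : Fin 4) : ℝ := etaS μ * x μ

/-- Connection coefficients Γ^μ_{νλ}(x) = −(x_ν δ^μ_λ + δ^μ_ν x_λ)/(x·x). -/
noncomputable def Gam (x : Fin 4 → ℝ) (μ ν lam : Fin 4) : ℝ :=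
  -((lowerIdx x ν) * (if μ = lam then (1:ℝ) else 0)
    + (if μ = ν then (1:ℝ) else 0) * lowerIdx x lam) / mdot x x

/-- The degenerate metric, sign `s`: g_{μν} = s·(l²/(x·x)²)(η_{μρ}η_{ντ} − η_{μν}η_{ρτ})x^ρx^τ. -/
noncomputable def gten (l s : ℝ) (x : Fin 4 → ℝ) (μ ν : Fin 4) : ℝ :=
  s * (l ^ 2 / (mdot x x) ^ 2) *
    ∑ ρ, ∑ τ, (etaM μ ρ * etaM ν τ - etaM μ ν * etaM ρ τ) * x ρ * x τ

/-- The degenerate (2,0)-tensor h^{μν} = l⁻⁴(x·x)x^μx^ν. -/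
noncomputable def hten (l : ℝ) (x : Fin 4 → ℝ) (μ ν : Fin 4) : ℝ :=
  (1 / l ^ 4) * mdot x x * x μ * x ν

/-- Partial derivative ∂_μ f at x. -/
noncomputable def pd (f : (Fin 4 → ℝ) → ℝ) (μ : Fin 4) (x : Fin 4 → ℝ) : ℝ :=
  fderiv ℝ f x (Pi.single μ 1)

/-- The Lorentz-boost vector field K₁ = t∂₁ − c⁻²x₁∂_t, in coordinates (x⁰ = ct, xⁱ)
(so t = x⁰/c, ∂_t = c∂₀, x₁ = −x¹). -/
noncomputable def K1 (c : ℝ) : (Fin 4 → ℝ) → Fin 4 → ℝ := fun p =>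
  (p 0 / c) • (Pi.single 1 1 : Fin 4 → ℝ)
    + (-(1 / c ^ 2) * (-(p 1)) * c) • (Pi.single 0 1 : Fin 4 → ℝ)

/- ### Auxiliary lemmas -/

/-- Coordinate projection as a continuous linear map. -/
noncomputable def pr (i : Fin 4) : (Fin 4 → ℝ) →L[ℝ] ℝ :=
  ContinuousLinearMap.proj (R := ℝ) (φ := fun _ : Fin 4 => ℝ) i

lemma hproj (x : Fin 4 → ℝ) (i : Fin 4) :
    HasFDerivAt (fun p : Fin 4 → ℝ => p i) (pr i) x := (pr i).hasFDerivAt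

lemma hQder (x : Fin 4 → ℝ) :
    HasFDerivAt (fun p : Fin 4 → ℝ => mdot p p)
      (∑ i, ((etaS i * x i) • pr i + x i • (etaS i • pr i))) x := by
  unfold mdot
  exact HasFDerivAt.fun_sum fun i _ => ((hproj x i).const_mul (etaS i)).mul (hproj x i)

lemma hQinv (x : Fin 4 → ℝ) (hx : mdot x x ≠ 0) :
    HasFDerivAt (fun p : Fin 4 → ℝ => (mdot p p)⁻¹)
      ((-(mdot x x ^ 2)⁻¹) • ∑ i, ((etaS i * x i) • pr i + x i • (etaS i • pr i))) x :=
  HasDerivAt.comp_hasFDerivAt (f := fun p : Fin 4 → ℝ => mdot p p) x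
    (hasDerivAt_inv hx) (hQder x)

lemma etaS_0 : etaS 0 = 1 := rfl
lemma etaS_1 : etaS 1 = -1 := rfl
lemma etaS_2 : etaS 2 = -1 := rfl
lemma etaS_3 : etaS 3 = -1 := rfl

set_option maxHeartbeats 4000000

lemma gten_eq (l s : ℝ) (p : Fin 4 → ℝ) (μ ν : Fin 4) :
    gten l s p μ ν = s * l ^ 2 *
      ((etaS μ * p μ * (etaS ν * p ν) - etaM μ ν * mdot p p)
        * ((mdot p p)⁻¹ * (mdot p p)⁻¹)) := by
  have hQ : mdot p p = p 0 * p 0 - p 1 * p 1 - p 2 * p 2 - p 3 * p 3 := by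
    simp [mdot, etaS, Fin.sum_univ_four]; ring
  have h2 : ((mdot p p) ^ 2)⁻¹ = (mdot p p)⁻¹ * (mdot p p)⁻¹ := by rw [sq, mul_inv]
  simp only [gten, div_eq_mul_inv, h2]
  fin_cases μ <;> fin_cases ν <;>
    simp [etaM, etaS, Fin.sum_univ_four] <;> rw [hQ] <;> ring

/-- The Lie derivative of g⁻ along the boost K₁ vanishes:
ℒ_ξ g_{μν} = g_{μν,λ}ξ^λ + g_{μλ}∂_νξ^λ + g_{λν}∂_μξ^λ = 0 on {x·x ≠ 0}. -/
theorem lie_derivative_g_boost (c l : ℝ) (hc : 0 < c) (hl : 0 < l) :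
    ∀ x : Fin 4 → ℝ, mdot x x ≠ 0 → ∀ μ ν : Fin 4,
      (∑ lam, pd (fun p => gten l (-1) p μ ν) lam x * K1 c x lam)
        + (∑ lam, gten l (-1) x μ lam * pd (fun p => K1 c p lam) ν x)
        + (∑ lam, gten l (-1) x lam ν * pd (fun p => K1 c p lam) μ x) = 0 := by
  intro x hx μ ν
  have hc0 : c ≠ 0 := ne_of_gt hc
  -- derivative of the boost components
  have hKfun : ∀ lam : Fin 4, (fun p : Fin 4 → ℝ => K1 c p lam)
      = fun p => ((Pi.single 1 1 : Fin 4 → ℝ) lam / c) * p 0 + ((Pi.single 0 1 : Fin 4 → ℝ) lam / c) * p 1 := by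
    intro lam; funext p
    simp only [K1, Pi.add_apply, Pi.smul_apply, smul_eq_mul]
    field_simp
  have hK : ∀ lam : Fin 4, HasFDerivAt (fun p : Fin 4 → ℝ => K1 c p lam)
      (((Pi.single 1 1 : Fin 4 → ℝ) lam / c) • pr 0 + ((Pi.single 0 1 : Fin 4 → ℝ) lam / c) • pr 1) x := by
    intro lam
    rw [hKfun lam]
    exact ((hproj x 0).const_mul _).add ((hproj x 1).const_mul _)
  have pdK : ∀ lam i : Fin 4, pd (fun p => K1 c p lam) i x
      = ((Pi.single 1 1 : Fin 4 → ℝ) lam / c) * (Pi.single i 1 : Fin 4 → ℝ) 0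
        + ((Pi.single 0 1 : Fin 4 → ℝ) lam / c) * (Pi.single i 1 : Fin 4 → ℝ) 1 := by
    intro lam i
    rw [pd, (hK lam).fderiv]
    simp [pr]
  -- derivative of the metric components
  have hfun : (fun p => gten l (-1) p μ ν) = fun p =>
      ((-1 : ℝ) * l ^ 2) * ((etaS μ * p μ * (etaS ν * p ν) - etaM μ ν * mdot p p)
        * ((mdot p p)⁻¹ * (mdot p p)⁻¹)) := by
    funext p
    rw [gten_eq l (-1) p μ ν]
  have hN : HasFDerivAt
      (fun p : Fin 4 → ℝ => etaS μ * p μ * (etaS ν * p ν) - etaM μ ν * mdot p p)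
      ((etaS μ * x μ) • ((etaS ν) • pr ν) + (etaS ν * x ν) • ((etaS μ) • pr μ)
        - (etaM μ ν) • ∑ i, ((etaS i * x i) • pr i + x i • (etaS i • pr i))) x :=
    (((hproj x μ).const_mul (etaS μ)).mul ((hproj x ν).const_mul (etaS ν))).sub
      ((hQder x).const_mul (etaM μ ν))
  have hg := (hN.mul ((hQinv x hx).mul (hQinv x hx))).const_mul ((-1 : ℝ) * l ^ 2)
  have pdg : ∀ lam : Fin 4, pd (fun p => gten l (-1) p μ ν) lam x
      = ((-1 : ℝ) * l ^ 2) * (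
          ((etaS μ * x μ * (etaS ν * (Pi.single lam 1 : Fin 4 → ℝ) ν)
              + etaS ν * x ν * (etaS μ * (Pi.single lam 1 : Fin 4 → ℝ) μ)
              - etaM μ ν * (2 * etaS lam * x lam)) * ((mdot x x)⁻¹ * (mdot x x)⁻¹))
          + (etaS μ * x μ * (etaS ν * x ν) - etaM μ ν * mdot x x)
            * (2 * ((mdot x x)⁻¹ * (-(mdot x x ^ 2)⁻¹ * (2 * etaS lam * x lam))))) := by
    intro lam
    rw [pd, hfun, (show HasFDerivAt (fun p : Fin 4 → ℝ => ((-1 : ℝ) * l ^ 2) * ((etaS μ * p μ * (etaS ν * p ν) - etaM μ ν * mdot p p) * ((mdot p p)⁻¹ * (mdot p p)⁻¹))) _ x from hg).fderiv]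
    fin_cases lam <;>
      simp [pr, Fin.sum_univ_four, etaS_0, etaS_1, etaS_2, etaS_3, Pi.single_apply] <;> ring
  simp only [pdg, pdK]
  have hK1 : ∀ lam : Fin 4, K1 c x lam
      = (x 0 / c) * (Pi.single 1 1 : Fin 4 → ℝ) lam + (x 1 / c) * (Pi.single 0 1 : Fin 4 → ℝ) lam := by
    intro lam
    simp only [K1, Pi.add_apply, Pi.smul_apply, smul_eq_mul]
    field_simp
  simp only [gten_eq, hK1, Fin.sum_univ_four]
  fin_cases μ <;> fin_cases ν <;>
    · simp [etaM, etaS, Pi.single_apply]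
      field_simp
      ring
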